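/- arXiv:2403.03778 — 2 statements merged into one kernel-verified Lean document; each statement's English description precedes it below -/
import Mathlib

section
/- Let p₁, …, p_r be random variables in [0,1], each marginally Uniform(0,1) (no independence assumed), and let p_(1) ≤ … ≤ p_(r) be their order statistics. Define Q = (∑_{i'=1}^r 1/i') · min_{1 ≤ i ≤ r} (r/i) p_(i). Then P(Q ≤ α) ≤ α for all α ∈ (0,1). -/
open MeasureTheory Finset
open scoped ENNReal
set_option maxHeartbeats 1000000


-- find the cell of a grid containing x
lemma find_cell (c : ℕ → ℝ) (x : ℝ) : ∀ b a, a < b → c a ≤ x → x ≤ c b →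
    ∃ l, a ≤ l ∧ l < b ∧ c l ≤ x ∧ x ≤ c (l + 1) := by
  intro b
  induction b with
  | zero => omega
  | succ b ih =>
    intro a hab h1 h2
    by_cases hx : x ≤ c b
    · rcases Nat.lt_or_ge a b with h | h
      · obtain ⟨l, u, v, w⟩ := ih a h h1 hx
        exact ⟨l, u, by omega, w⟩
      · have : a = b := by omega
        subst this
        exact ⟨a, le_rfl, by omega, h1, h2⟩
    · exact ⟨b, by omega, by omega, le_of_lt (not_le.mp hx), h2⟩

lemma key_sum {r : ℕ} (c : ℕ → ℝ) (hc0 : c 0 = 0) (q : Fin r → ℝ)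
    (hq0 : ∀ j, 0 ≤ q j) (i : Fin r) (hi : q (Tuple.sort q i) ≤ c (i.1 + 1)) :
    1 ≤ ∑ j : Fin r, ∑ l ∈ Finset.range r,
      (Set.Icc (c l) (c (l + 1))).indicator
        (fun _ => ENNReal.ofReal (1 / (l + 1))) (q j) := by
  set σ := Tuple.sort q with hσ
  set F : Finset (Fin r) := Finset.univ.filter (fun i => q (σ i) ≤ c (i.1 + 1)) with hF
  have hFne : F.Nonempty := ⟨i, by simp [hF, hi]⟩
  set i₀ := F.min' hFne with hi₀def
  have hi₀ : q (σ i₀) ≤ c (i₀.1 + 1) := by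
    have := F.min'_mem hFne
    simpa [hF] using this
  have hmono : Monotone (q ∘ σ) := Tuple.monotone_sort q
  have hlow : ∀ m : Fin r, m ≤ i₀ → c m.1 ≤ q (σ m) := by
    intro m hm
    rcases Nat.eq_zero_or_pos m.1 with h0 | hpos
    · rw [h0, hc0]; exact hq0 _
    · have hm1 : m.1 - 1 < r := by omega
      set m' : Fin r := ⟨m.1 - 1, hm1⟩ with hm'
      have hm'm : m' < m := by simp [Fin.lt_def, hm']; omega
      have hnot : m' ∉ F := fun hmem =>
        absurd (F.min'_le m' hmem) (not_le.mpr (lt_of_lt_of_le hm'm hm))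
      have hnot2 : ¬ (q (σ m') ≤ c (m'.1 + 1)) := by
        simpa [hF] using hnot
      have heq : m'.1 + 1 = m.1 := by simp [hm']; omega
      have h1 : c m.1 < q (σ m') := by rw [← heq]; exact not_le.mp hnot2
      exact (h1.trans_le (hmono hm'm.le)).le
  have hcell : ∀ m : Fin r, m ≤ i₀ →
      ENNReal.ofReal (1 / (i₀.1 + 1)) ≤ ∑ l ∈ Finset.range r,
        (Set.Icc (c l) (c (l + 1))).indicator
          (fun _ => ENNReal.ofReal (1 / (l + 1))) (q (σ m)) := by
    intro m hm
    have hxlow : c m.1 ≤ q (σ m) := hlow m hm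
    have hxhigh : q (σ m) ≤ c (i₀.1 + 1) := (hmono hm).trans hi₀
    obtain ⟨l, hal, hlb, hcl, hcl1⟩ :=
      find_cell c (q (σ m)) (i₀.1 + 1) m.1 (by omega) hxlow hxhigh
    have hlr : l ∈ Finset.range r := by
      have : i₀.1 < r := i₀.2
      exact Finset.mem_range.mpr (by omega)
    have hterm : ENNReal.ofReal (1 / (i₀.1 + 1)) ≤
        (Set.Icc (c l) (c (l + 1))).indicator
          (fun _ => ENNReal.ofReal (1 / (l + 1))) (q (σ m)) := by
      rw [Set.indicator_of_mem (Set.mem_Icc.mpr ⟨hcl, hcl1⟩)]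
      apply ENNReal.ofReal_le_ofReal
      apply one_div_le_one_div_of_le (by positivity)
      have : l ≤ i₀.1 := by omega
      push_cast
      linarith [(Nat.cast_le (α := ℝ)).mpr this]
    exact hterm.trans (Finset.single_le_sum
        (f := fun l => (Set.Icc (c l) (c (l + 1))).indicator
          (fun _ => ENNReal.ofReal (1 / (l + 1))) (q (σ m)))
        (fun _ _ => zero_le) hlr)
  calc (1 : ℝ≥0∞) = (i₀.1 + 1) • ENNReal.ofReal (1 / (i₀.1 + 1)) := by
        rw [nsmul_eq_mul, ← ENNReal.ofReal_natCast, ← ENNReal.ofReal_mul (by positivity)]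
        have h1 : ((i₀.1 + 1 : ℕ) : ℝ) * (1 / ((i₀.1 : ℝ) + 1)) = 1 := by
          push_cast [Nat.cast_add]; field_simp
        rw [h1, ENNReal.ofReal_one]
    _ = ∑ m ∈ Finset.Iic i₀, ENNReal.ofReal (1 / (i₀.1 + 1)) := by
        rw [Finset.sum_const, Fin.card_Iic]
    _ ≤ ∑ m ∈ Finset.Iic i₀, ∑ l ∈ Finset.range r,
        (Set.Icc (c l) (c (l + 1))).indicator
          (fun _ => ENNReal.ofReal (1 / (l + 1))) (q (σ m)) := by
        exact Finset.sum_le_sum (fun m hm => hcell m (Finset.mem_Iic.mp hm))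
    _ ≤ ∑ m : Fin r, ∑ l ∈ Finset.range r,
        (Set.Icc (c l) (c (l + 1))).indicator
          (fun _ => ENNReal.ofReal (1 / (l + 1))) (q (σ m)) := by
        exact Finset.sum_le_sum_of_subset (Finset.subset_univ _)
    _ = ∑ j : Fin r, ∑ l ∈ Finset.range r,
        (Set.Icc (c l) (c (l + 1))).indicator
          (fun _ => ENNReal.ofReal (1 / (l + 1))) (q j) := by
        exact Equiv.sum_comp σ (fun j => ∑ l ∈ Finset.range r,
          (Set.Icc (c l) (c (l + 1))).indicator
            (fun _ => ENNReal.ofReal (1 / (l + 1))) (q j))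

/-- Combined p-value with harmonic penalty: if `p 0, …, p (r-1)` are (possibly
dependent) random variables each uniformly distributed on `[0,1]`, and
`Q = (∑_{i'=1}^r 1/i') ⬝ min_i (r/i) p_(i)` where `p_(i)` are the order
statistics, then `P(Q ≤ α) ≤ α` for all `α ∈ (0,1)`. -/
theorem combined_pvalue_valid
    {Ω : Type*} [MeasurableSpace Ω] (μ : Measure Ω) [IsProbabilityMeasure μ]
    {r : ℕ} (hr : 0 < r) (p : Fin r → Ω → ℝ)
    (hmeas : ∀ i, Measurable (p i))
    (hunif : ∀ i, Measure.map (p i) μ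
      = MeasureTheory.volume.restrict (Set.Icc (0 : ℝ) 1))
    (Q : Ω → ℝ)
    (hQ : Q = fun ω =>
      (∑ i' ∈ Finset.range r, (1 : ℝ) / (i' + 1)) *
        Finset.univ.inf' (Finset.univ_nonempty_iff.mpr ⟨⟨0, hr⟩⟩)
          (fun i : Fin r =>
            ((r : ℝ) / (i.1 + 1)) *
              (fun j => p j ω) (Tuple.sort (fun j => p j ω) i))) :
    ∀ α ∈ Set.Ioo (0 : ℝ) 1, μ {ω | Q ω ≤ α} ≤ ENNReal.ofReal α := by
  intro α hα
  obtain ⟨hα0, hα1⟩ := hα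
  set H : ℝ := ∑ i' ∈ Finset.range r, (1 : ℝ) / (i' + 1) with hH
  have hH1 : 1 ≤ H := by
    have h0 : (0 : ℕ) ∈ Finset.range r := Finset.mem_range.mpr hr
    calc (1 : ℝ) = 1 / ((0 : ℕ) + 1) := by norm_num
      _ ≤ H := Finset.single_le_sum (f := fun i : ℕ => (1 : ℝ) / (i + 1))
          (fun i _ => by positivity) h0
  have hHpos : 0 < H := lt_of_lt_of_le one_pos hH1
  set t : ℝ := α / H with ht
  have htpos : 0 < t := div_pos hα0 hHpos
  have htle : t ≤ α := div_le_self hα0.le hH1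
  set c : ℕ → ℝ := fun l => l * t / r with hc
  have hc0 : c 0 = 0 := by simp [hc]
  set g : ℝ → ℝ≥0∞ := fun x => ∑ l ∈ Finset.range r,
    (Set.Icc (c l) (c (l + 1))).indicator
      (fun _ => ENNReal.ofReal (1 / (l + 1))) x with hg
  have hgmeas : Measurable g :=
    Finset.measurable_sum _ (fun l _ =>
      Measurable.indicator measurable_const measurableSet_Icc)
  set F : Ω → ℝ≥0∞ := fun ω => ∑ j : Fin r, g (p j ω) with hFdef
  have hFmeas : Measurable F :=
    Finset.measurable_sum _ (fun j _ => hgmeas.comp (hmeas j))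
  have hsub : {ω | Q ω ≤ α} ⊆ {ω | 1 ≤ F ω} ∪ ⋃ j, {ω | p j ω < 0} := by
    intro ω hω
    by_cases hneg : ∀ j, 0 ≤ p j ω
    · left
      rw [hQ] at hω
      simp only [Set.mem_setOf_eq] at hω
      have hinf : Finset.univ.inf' (Finset.univ_nonempty_iff.mpr ⟨⟨0, hr⟩⟩)
          (fun i : Fin r => ((r : ℝ) / (i.1 + 1)) *
            (fun j => p j ω) (Tuple.sort (fun j => p j ω) i)) ≤ t := by
        rw [ht, le_div_iff₀ hHpos, mul_comm]
        exact hω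
      obtain ⟨i, -, hi⟩ := (Finset.inf'_le_iff _).mp hinf
      have hri : (0 : ℝ) < (r : ℝ) / (i.1 + 1) := by positivity
      have hkey : (fun j => p j ω) (Tuple.sort (fun j => p j ω) i) ≤ c (i.1 + 1) := by
        rw [mul_comm] at hi
        rw [← le_div_iff₀ hri] at hi
        have heq : t / ((r : ℝ) / (i.1 + 1)) = c (i.1 + 1) := by
          rw [hc]; push_cast; field_simp
        linarith [hi, heq.le]
      exact key_sum c hc0 (fun j => p j ω) hneg i hkey
    · right
      push_neg at hneg
      obtain ⟨j, hj⟩ := hneg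
      exact Set.mem_iUnion.mpr ⟨j, hj⟩
  have hnull : μ (⋃ j, {ω | p j ω < 0}) = 0 := by
    refine measure_iUnion_null (fun j => ?_)
    have hpre : {ω | p j ω < 0} = p j ⁻¹' Set.Iio 0 := rfl
    rw [hpre, ← Measure.map_apply (hmeas j) measurableSet_Iio, hunif j,
      Measure.restrict_apply measurableSet_Iio]
    have : Set.Iio (0 : ℝ) ∩ Set.Icc 0 1 = ∅ := by
      apply Set.eq_empty_iff_forall_notMem.mpr
      rintro x ⟨h1, h2, h3⟩
      exact absurd h2 (not_le.mpr h1)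
    rw [this, measure_empty]
  have hintg : ∫⁻ x, g x ∂(volume.restrict (Set.Icc (0 : ℝ) 1))
      = ENNReal.ofReal H * ENNReal.ofReal (t / r) := by
    rw [hg]
    rw [lintegral_finset_sum _ (fun l _ =>
      Measurable.indicator measurable_const measurableSet_Icc)]
    have hν : ∀ l ∈ Finset.range r,
        (volume.restrict (Set.Icc (0 : ℝ) 1)) (Set.Icc (c l) (c (l + 1)))
          = ENNReal.ofReal (t / r) := by
      intro l hl
      rw [Measure.restrict_apply measurableSet_Icc]
      have hsub2 : Set.Icc (c l) (c (l + 1)) ⊆ Set.Icc (0 : ℝ) 1 := by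
        apply Set.Icc_subset_Icc
        · rw [hc]; positivity
        · rw [hc]
          have hl1 : (l : ℝ) + 1 ≤ (r : ℝ) := by
            have := Finset.mem_range.mp hl
            exact_mod_cast this
          have hrpos : (0 : ℝ) < r := by exact_mod_cast hr
          have h1 : ((l : ℝ) + 1) * t / r ≤ (r : ℝ) * t / r := by
            gcongr
          have h2 : (r : ℝ) * t / r = t := by
            field_simp
          push_cast
          calc ((l : ℝ) + 1) * t / r ≤ (r : ℝ) * t / r := h1
            _ = t := h2
            _ ≤ 1 := htle.trans hα1.le
      rw [Set.inter_eq_left.mpr hsub2, Real.volume_Icc]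
      congr 1
      rw [hc]
      push_cast
      have hrne : (r : ℝ) ≠ 0 := by positivity
      field_simp
      ring
    calc ∑ l ∈ Finset.range r, ∫⁻ x, (Set.Icc (c l) (c (l + 1))).indicator
          (fun _ => ENNReal.ofReal (1 / (l + 1))) x
            ∂(volume.restrict (Set.Icc (0 : ℝ) 1))
        = ∑ l ∈ Finset.range r, ENNReal.ofReal (1 / (l + 1)) * ENNReal.ofReal (t / r) := by
          refine Finset.sum_congr rfl (fun l hl => ?_)
          rw [lintegral_indicator_const measurableSet_Icc, hν l hl]
      _ = ENNReal.ofReal H * ENNReal.ofReal (t / r) := by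
          rw [← Finset.sum_mul]
          congr 1
          rw [hH, ENNReal.ofReal_sum_of_nonneg (fun i _ => by positivity)]
  calc μ {ω | Q ω ≤ α}
      ≤ μ ({ω | 1 ≤ F ω} ∪ ⋃ j, {ω | p j ω < 0}) := measure_mono hsub
    _ ≤ μ {ω | 1 ≤ F ω} + μ (⋃ j, {ω | p j ω < 0}) := measure_union_le _ _
    _ = μ {ω | 1 ≤ F ω} := by rw [hnull, add_zero]
    _ ≤ ∫⁻ ω, F ω ∂μ := by
        have h := mul_meas_ge_le_lintegral₀ (μ := μ) hFmeas.aemeasurable 1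
        rw [one_mul] at h
        exact h
    _ = ∑ j : Fin r, ∫⁻ ω, g (p j ω) ∂μ := by
        rw [hFdef]
        exact lintegral_finset_sum _ (fun j _ => hgmeas.comp (hmeas j))
    _ = ∑ j : Fin r, ∫⁻ x, g x ∂(volume.restrict (Set.Icc (0 : ℝ) 1)) := by
        refine Finset.sum_congr rfl (fun j _ => ?_)
        rw [← hunif j, lintegral_map hgmeas (hmeas j)]
    _ = (r : ℝ≥0∞) * (ENNReal.ofReal H * ENNReal.ofReal (t / r)) := by
        rw [hintg, Finset.sum_const, Finset.card_univ, Fintype.card_fin, nsmul_eq_mul]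
    _ = ENNReal.ofReal α := by
        rw [← ENNReal.ofReal_natCast, ← ENNReal.ofReal_mul (by positivity),
          ← ENNReal.ofReal_mul (by positivity)]
        congr 1
        rw [ht]
        have hrne : (r : ℝ) ≠ 0 := by positivity
        field_simp
end

section
/- If U is uniformly distributed on [0,1] and α ∈ (0,1), r ∈ ℕ with r ≥ 1, then E[ max_{1 ≤ i ≤ r} 1{U ≤ α i / r} / (i/r) ] = α ∑_{i=1}^r 1/i. -/
open MeasureTheory Finset

/-- If `U ~ Uniform(0,1)`, `α ∈ (0,1)` and `r ≥ 1`, then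
`E[max_{1 ≤ i ≤ r} 1{U ≤ α i/r} / (i/r)] = α ∑_{i=1}^r 1/i`
(the max being `0` when all indicators vanish). -/
theorem expectation_max_indicator_uniform
    {Ω : Type*} [MeasurableSpace Ω] (μ : Measure Ω) [IsProbabilityMeasure μ]
    (U : Ω → ℝ) (hU : Measure.map U μ
      = MeasureTheory.volume.restrict (Set.Icc (0 : ℝ) 1))
    (hUmeas : Measurable U)
    {r : ℕ} (hr : 0 < r) (α : ℝ) (hα : α ∈ Set.Ioo (0 : ℝ) 1) :
    ∫ ω, (Finset.univ.sup' (Finset.univ_nonempty_iff.mpr ⟨⟨0, hr⟩⟩)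
        (fun i : Fin r =>
          (if U ω ≤ α * (i.1 + 1) / r then (1 : ℝ) else 0) / ((i.1 + 1) / r))) ∂μ
      = α * ∑ i ∈ Finset.range r, (1 : ℝ) / (i + 1) := by
  obtain ⟨hα0, hα1⟩ := hα
  have hr0 : (0:ℝ) < r := by exact_mod_cast hr
  set ne : (Finset.univ : Finset (Fin r)).Nonempty := Finset.univ_nonempty_iff.mpr ⟨⟨0, hr⟩⟩
  set g : ℝ → ℝ := fun u => Finset.univ.sup' ne
      (fun i : Fin r => (if u ≤ α * (i.1 + 1) / r then (1 : ℝ) else 0) / ((i.1 + 1) / r))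
    with hg
  have hgm : Measurable g := by
    have : g = Finset.univ.sup' ne
        (fun (i : Fin r) (u : ℝ) => (if u ≤ α * (i.1 + 1) / r then (1 : ℝ) else 0) / ((i.1 + 1) / r)) := by
      funext u; rw [hg]; simp [Finset.sup'_apply]
    rw [this]
    refine Finset.measurable_sup' ne fun i _ => ?_
    exact (Measurable.ite (measurableSet_le measurable_id measurable_const)
      measurable_const measurable_const).div_const _
  have hIoc : MeasureTheory.volume.restrict (Set.Icc (0:ℝ) 1)
      = MeasureTheory.volume.restrict (Set.Ioc (0:ℝ) 1) :=
    (Measure.restrict_congr_set MeasureTheory.Ioc_ae_eq_Icc).symm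
  -- reduce to integral over (0,1]
  have h1 : ∫ ω, g (U ω) ∂μ = ∫ u, g u ∂(MeasureTheory.volume.restrict (Set.Ioc (0:ℝ) 1)) := by
    rw [← hIoc, ← hU, integral_map hUmeas.aemeasurable hgm.aestronglyMeasurable]
  -- the step function
  set h : ℝ → ℝ := fun u => ∑ k ∈ Finset.range r,
      Set.indicator (Set.Ioc (α * k / r) (α * (k+1) / r)) (fun _ => (r : ℝ) / (k+1)) u with hh
  -- key sup computations
  have sup_val : ∀ (k : ℕ) (hk : k < r) (u : ℝ), α * k / r < u → u ≤ α * (k+1) / r →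
      g u = (r : ℝ) / (k+1) := by
    intro k hk u hu1 hu2
    rw [hg]
    apply le_antisymm
    · apply Finset.sup'_le
      intro i _
      have hik : (i.1 : ℝ) + 1 > 0 := by positivity
      split_ifs with hcond
      · rw [div_div_eq_mul_div, one_mul]
        by_cases hle : i.1 < k
        · exfalso
          have hc : α * (i.1+1) / r ≤ α * k / r := by
            gcongr
            exact_mod_cast hle
          linarith [hcond.trans hc]
        · push_neg at hle
          have : (k:ℝ) + 1 ≤ (i.1 : ℝ) + 1 := by exact_mod_cast by omega
          rw [div_le_div_iff₀ hik (by positivity)]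
          nlinarith [hr0.le]
      · simp only [zero_div]
        positivity
    · have := Finset.le_sup' (f := fun i : Fin r => (if u ≤ α * (i.1 + 1) / r then (1 : ℝ) else 0) / ((i.1 + 1) / r)) (b := (⟨k, hk⟩ : Fin r)) (Finset.mem_univ _)
      simpa [if_pos hu2, one_div, div_div_eq_mul_div, -Finset.le_sup'_iff] using this
  have sup_zero : ∀ u : ℝ, α < u → g u = 0 := by
    intro u hu
    rw [hg]
    apply le_antisymm
    · apply Finset.sup'_le
      intro i _
      have : α * (i.1 + 1) / r ≤ α := by
        rw [div_le_iff₀ hr0]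
        have : (i.1 : ℝ) + 1 ≤ r := by exact_mod_cast i.2
        nlinarith
      rw [if_neg (by linarith)]
      simp
    · have := Finset.le_sup' (f := fun i : Fin r => (if u ≤ α * (i.1 + 1) / r then (1 : ℝ) else 0) / ((i.1 + 1) / r)) (b := (⟨0, hr⟩ : Fin r)) (Finset.mem_univ _)
      refine le_trans ?_ this
      positivity
  -- pointwise equality on (0,1]
  have key : ∀ u ∈ Set.Ioc (0:ℝ) 1, g u = h u := by
    intro u hu
    obtain ⟨hu0, hu1⟩ := hu
    by_cases hle : u ≤ α
    · set n := ⌈u * r / α⌉₊ with hn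
      have hn1 : 1 ≤ n := by
        rw [hn, Nat.one_le_ceil_iff]
        positivity
      have hnr : n ≤ r := by
        rw [hn]
        apply Nat.ceil_le.mpr
        rw [div_le_iff₀ hα0]
        nlinarith
      have hlb : ((n:ℝ) - 1) < u * r / α := by
        have h2 : ((n - 1 : ℕ) : ℝ) < u * r / α := Nat.lt_ceil.mp (by omega)
        have : ((n - 1 : ℕ) : ℝ) = (n:ℝ) - 1 := by
          push_cast [Nat.cast_sub hn1]; ring
        linarith [this ▸ h2]
      have hub : u * r / α ≤ n := Nat.le_ceil _
      set k := n - 1 with hk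
      have hkr : k < r := by omega
      have hkn : (k : ℝ) = (n : ℝ) - 1 := by
        rw [hk]; push_cast [Nat.cast_sub hn1]; ring
      have h1' : α * k / r < u := by
        rw [div_lt_iff₀ hr0]
        rw [lt_div_iff₀ hα0] at hlb
        rw [hkn]; nlinarith
      have h2' : u ≤ α * (k+1) / r := by
        rw [le_div_iff₀ hr0]
        rw [div_le_iff₀ hα0] at hub
        rw [hkn]; nlinarith
      rw [sup_val k hkr u h1' h2']
      simp only [hh]
      rw [Finset.sum_eq_single k]
      · rw [Set.indicator_of_mem (Set.mem_Ioc.mpr ⟨h1', h2'⟩)]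
      · intro b hb hbk
        apply Set.indicator_of_notMem
        rintro ⟨hb1, hb2⟩
        rcases lt_or_gt_of_ne hbk with hlt | hgt
        · have hc : α * (b+1) / r ≤ α * k / r := by
            gcongr
            have : b + 1 ≤ k := by omega
            exact_mod_cast this
          linarith
        · have hc : α * (k+1) / r ≤ α * b / r := by
            gcongr
            have : k + 1 ≤ b := by omega
            exact_mod_cast this
          linarith
      · intro hk'
        exact absurd (Finset.mem_range.mpr hkr) hk'
    · push_neg at hle
      rw [sup_zero u hle]
      simp only [hh]
      symm
      apply Finset.sum_eq_zero
      intro k hk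
      apply Set.indicator_of_notMem
      rintro ⟨_, hb2⟩
      have : α * (k+1) / r ≤ α := by
        rw [div_le_iff₀ hr0]
        have : (k : ℝ) + 1 ≤ r := by exact_mod_cast Finset.mem_range.mp hk
        nlinarith
      linarith
  have hae : g =ᵐ[MeasureTheory.volume.restrict (Set.Ioc (0:ℝ) 1)] h :=
    (ae_restrict_iff' measurableSet_Ioc).mpr (Filter.Eventually.of_forall key)
  rw [show (∫ ω, (Finset.univ.sup' ne
        (fun i : Fin r =>
          (if U ω ≤ α * (i.1 + 1) / r then (1 : ℝ) else 0) / ((i.1 + 1) / r))) ∂μ)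
      = ∫ ω, g (U ω) ∂μ from rfl, h1, integral_congr_ae hae, hh]
  -- compute the integral of the step function
  have hsubk : ∀ k ∈ Finset.range r, Set.Ioc (α * k / r) (α * (k+1) / r) ⊆ Set.Ioc (0:ℝ) 1 := by
    intro k hk
    apply Set.Ioc_subset_Ioc
    · positivity
    · rw [div_le_iff₀ hr0]
      have : (k : ℝ) + 1 ≤ r := by exact_mod_cast Finset.mem_range.mp hk
      nlinarith
  rw [integral_finset_sum]
  · have hterm : ∀ k ∈ Finset.range r,
        (∫ u, Set.indicator (Set.Ioc (α * k / r) (α * (k+1) / r)) (fun _ => (r : ℝ) / (k+1)) u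
          ∂(MeasureTheory.volume.restrict (Set.Ioc (0:ℝ) 1)))
        = α * (1 / (k+1)) := by
      intro k hk
      rw [integral_indicator_const _ measurableSet_Ioc]
      rw [measureReal_def]
      rw [Measure.restrict_apply measurableSet_Ioc,
        Set.inter_eq_self_of_subset_left (hsubk k hk)]
      rw [Real.volume_Ioc]
      have hdiff : α * (k+1) / r - α * k / r = α / r := by
        field_simp; ring
      rw [hdiff, ENNReal.toReal_ofReal (by positivity)]
      rw [smul_eq_mul]
      field_simp
    rw [Finset.sum_congr rfl hterm, ← Finset.mul_sum]
  · intro k hk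
    rw [integrable_indicator_iff measurableSet_Ioc]
    apply (integrableOn_const_iff).mpr
    right
    calc (MeasureTheory.volume.restrict (Set.Ioc (0:ℝ) 1)) (Set.Ioc (α * k / r) (α * (k+1) / r))
        ≤ MeasureTheory.volume (Set.Ioc (α * k / r) (α * (k+1) / r)) :=
          Measure.restrict_le_self _
      _ < ⊤ := by rw [Real.volume_Ioc]; exact ENNReal.ofReal_lt_top
end
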